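/- Let S = M^1_{\geq 0} \times \cdots \times M^d_{\geq 0}. For every ideal set I of S and every m-irreducible ideal set J containing I, there exists an ideal set J' containing I, minimal among m-irreducible ideal sets containing I, with J' \subseteq J. Moreover, the intersection of any chain (under inclusion) of m-irreducible ideal sets containing I is again an m-irreducible ideal set containing I. -/
import Mathlib


/-- The semigroup `S = M^1_{≥0} × ⋯ × M^d_{≥0}`, realized as a subset of `Fin d → ℝ`. -/
def Sset {d : ℕ} (M : Fin d → AddSubgroup ℝ) : Set (Fin d → ℝ) :=
  {s | ∀ i, s i ∈ M i ∧ 0 ≤ s i}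

/-- The "monomial ideal set" (up-set) generated by `T ⊆ S`. -/
def Up {d : ℕ} (M : Fin d → AddSubgroup ℝ) (T : Set (Fin d → ℝ)) : Set (Fin d → ℝ) :=
  {s | ∃ t ∈ T, ∃ u ∈ Sset M, s = t + u}

/-- An ideal set of `S`: a subset of `S` closed under adding arbitrary elements of `S`. -/
def IsIdealSet {d : ℕ} (M : Fin d → AddSubgroup ℝ) (I : Set (Fin d → ℝ)) : Prop :=
  I ⊆ Sset M ∧ ∀ s ∈ I, ∀ u ∈ Sset M, s + u ∈ I

/-- The m-prime ideal set `Q_T = {s ∈ S | s i > 0 for some i ∈ T}`. -/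
def QT {d : ℕ} (M : Fin d → AddSubgroup ℝ) (T : Finset (Fin d)) : Set (Fin d → ℝ) :=
  {s ∈ Sset M | ∃ i ∈ T, 0 < s i}

/-- An m-prime ideal set: a proper ideal set `P` with `f + g ∈ P → f ∈ P ∨ g ∈ P`. -/
def IsMPrime {d : ℕ} (M : Fin d → AddSubgroup ℝ) (P : Set (Fin d → ℝ)) : Prop :=
  IsIdealSet M P ∧ P ≠ Sset M ∧
    ∀ f ∈ Sset M, ∀ g ∈ Sset M, f + g ∈ P → f ∈ P ∨ g ∈ P

/-- An m-irreducible ideal set. -/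
def MIrred {d : ℕ} (M : Fin d → AddSubgroup ℝ) (I : Set (Fin d → ℝ)) : Prop :=
  IsIdealSet M I ∧ I ≠ Sset M ∧
    ∀ J K : Set (Fin d → ℝ), IsIdealSet M J → IsIdealSet M K → I = J ∩ K → I = J ∨ I = K

/-- Monomial Krull dimension: `sup {d - |T| : Q_T ⊇ I}` (m-primes are exactly the `Q_T`). -/
noncomputable def mdim {d : ℕ} (M : Fin d → AddSubgroup ℝ) (I : Set (Fin d → ℝ)) : ℕ :=
  sSup {n : ℕ | ∃ T : Finset (Fin d), I ⊆ QT M T ∧ n = d - T.card}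

/-- Euclidean distance between exponent vectors. -/
noncomputable def myDist {d : ℕ} (γ δ : Fin d → ℝ) : ℝ :=
  Real.sqrt (∑ i, (γ i - δ i) ^ 2)

/-- `dist(I,J) < ε` in the sense of Definition 4.5 of the paper. -/
def DistLT {d : ℕ} (ε : ℝ) (I J : Set (Fin d → ℝ)) : Prop :=
  (∀ γ ∈ I, ∃ δ ∈ J, myDist γ δ < ε) ∧ (∀ δ ∈ J, ∃ γ ∈ I, myDist γ δ < ε)

/-- Distance between ideal sets (Definition 4.6). -/
noncomputable def idealDist {d : ℕ} (I J : Set (Fin d → ℝ)) : ℝ :=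
  sInf {ε : ℝ | 0 < ε ∧ DistLT ε I J}

/-- Finitely generated ideal set. -/
def IsFG {d : ℕ} (M : Fin d → AddSubgroup ℝ) (I : Set (Fin d → ℝ)) : Prop :=
  ∃ G : Finset (Fin d → ℝ), ↑G ⊆ Sset M ∧ I = Up M ↑G

section Aux

variable {d : ℕ} (M : Fin d → AddSubgroup ℝ)

lemma sset_zero : (0 : Fin d → ℝ) ∈ Sset M := fun i => ⟨(M i).zero_mem, le_refl 0⟩

lemma sset_add {a b : Fin d → ℝ} (ha : a ∈ Sset M) (hb : b ∈ Sset M) : a + b ∈ Sset M :=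
  fun i => ⟨(M i).add_mem (ha i).1 (hb i).1, add_nonneg (ha i).2 (hb i).2⟩

/-- The complement of `I` in `S` is directed (under the `S`-translation order). -/
def DirCompl (I : Set (Fin d → ℝ)) : Prop :=
  ∀ a ∈ Sset M \ I, ∀ b ∈ Sset M \ I, ∃ c ∈ Sset M \ I,
    (∃ u ∈ Sset M, c = a + u) ∧ (∃ v ∈ Sset M, c = b + v)

/-- An ideal set is m-irreducible iff it is proper and its complement in `S` is directed. -/
lemma mirred_iff_dir (I : Set (Fin d → ℝ)) :
    MIrred M I ↔ IsIdealSet M I ∧ I ≠ Sset M ∧ DirCompl M I := by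
  constructor
  · rintro ⟨hid, hne, hirr⟩
    refine ⟨hid, hne, ?_⟩
    intro a ha b hb
    by_contra hdir
    push_neg at hdir
    -- build the two ideal sets `I ∪ (a + S)` and `I ∪ (b + S)`
    set Ja : Set (Fin d → ℝ) := I ∪ {x | ∃ u ∈ Sset M, x = a + u} with hJa
    set Jb : Set (Fin d → ℝ) := I ∪ {x | ∃ v ∈ Sset M, x = b + v} with hJb
    have hJaId : IsIdealSet M Ja := by
      constructor
      · rintro x (hx | ⟨u, hu, rfl⟩)
        · exact hid.1 hx
        · exact sset_add M ha.1 hu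
      · rintro s (hs | ⟨u, hu, rfl⟩) w hw
        · exact Or.inl (hid.2 s hs w hw)
        · exact Or.inr ⟨u + w, sset_add M hu hw, add_assoc _ _ _⟩
    have hJbId : IsIdealSet M Jb := by
      constructor
      · rintro x (hx | ⟨v, hv, rfl⟩)
        · exact hid.1 hx
        · exact sset_add M hb.1 hv
      · rintro s (hs | ⟨v, hv, rfl⟩) w hw
        · exact Or.inl (hid.2 s hs w hw)
        · exact Or.inr ⟨v + w, sset_add M hv hw, add_assoc _ _ _⟩
    have hIeq : I = Ja ∩ Jb := by
      apply Set.Subset.antisymm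
      · exact fun x hx => ⟨Or.inl hx, Or.inl hx⟩
      · rintro x ⟨hxa | ⟨u, hu, hxu⟩, hxb⟩
        · exact hxa
        rcases hxb with hxb | ⟨v, hv, hxv⟩
        · exact hxb
        -- x is a common upper bound of a, b; it must lie in I
        by_contra hxI
        have hxS : x ∈ Sset M := by rw [hxu]; exact sset_add M ha.1 hu
        exact hdir x ⟨hxS, hxI⟩ ⟨u, hu, hxu⟩ v hv hxv
    rcases hirr Ja Jb hJaId hJbId hIeq with h | h
    · exact ha.2 (h ▸ Or.inr ⟨0, sset_zero M, (add_zero a).symm⟩)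
    · exact hb.2 (h ▸ Or.inr ⟨0, sset_zero M, (add_zero b).symm⟩)
  · rintro ⟨hid, hne, hdir⟩
    refine ⟨hid, hne, ?_⟩
    intro J K hJ hK hIeq
    by_contra h
    push_neg at h
    obtain ⟨hIJ, hIK⟩ := h
    have hIJ' : I ⊆ J := hIeq ▸ Set.inter_subset_left
    have hIK' : I ⊆ K := hIeq ▸ Set.inter_subset_right
    obtain ⟨f, hfJ, hfI⟩ : ∃ f, f ∈ J ∧ f ∉ I := by
      by_contra hh; push_neg at hh
      exact hIJ (Set.Subset.antisymm hIJ' hh)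
    obtain ⟨g, hgK, hgI⟩ : ∃ g, g ∈ K ∧ g ∉ I := by
      by_contra hh; push_neg at hh
      exact hIK (Set.Subset.antisymm hIK' hh)
    obtain ⟨c, hc, ⟨u, hu, hcu⟩, ⟨v, hv, hcv⟩⟩ :=
      hdir f ⟨hJ.1 hfJ, hfI⟩ g ⟨hK.1 hgK, hgI⟩
    have hcJ : c ∈ J := hcu ▸ hJ.2 f hfJ u hu
    have hcK : c ∈ K := hcv ▸ hK.2 g hgK v hv
    exact hc.2 (hIeq ▸ ⟨hcJ, hcK⟩)

/-- The intersection of a nonempty chain of m-irreducible ideal sets is m-irreducible. -/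
lemma chain_sInter_mirred (C : Set (Set (Fin d → ℝ))) (hne : C.Nonempty)
    (hchain : IsChain (· ⊆ ·) C) (hC : ∀ c ∈ C, MIrred M c) : MIrred M (⋂₀ C) := by
  obtain ⟨c0, hc0⟩ := hne
  have hc0' := hC c0 hc0
  rw [mirred_iff_dir]
  refine ⟨⟨?_, ?_⟩, ?_, ?_⟩
  · exact fun x hx => hc0'.1.1 (hx c0 hc0)
  · intro s hs u hu c hc
    exact (hC c hc).1.2 s (hs c hc) u hu
  · intro h
    exact hc0'.2.1 (Set.Subset.antisymm hc0'.1.1 (h ▸ Set.sInter_subset_of_mem hc0))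
  · intro a ha b hb
    obtain ⟨c1, hc1C, hac1⟩ : ∃ c1 ∈ C, a ∉ c1 := by
      by_contra hh; push_neg at hh; exact ha.2 fun c hc => hh c hc
    obtain ⟨c2, hc2C, hbc2⟩ : ∃ c2 ∈ C, b ∉ c2 := by
      by_contra hh; push_neg at hh; exact hb.2 fun c hc => hh c hc
    rcases hchain.total hc1C hc2C with hle | hle
    · -- c1 ⊆ c2, use c1
      have hdir := ((mirred_iff_dir M c1).mp (hC c1 hc1C)).2.2
      obtain ⟨e, he, hea, heb⟩ := hdir a ⟨ha.1, hac1⟩ b ⟨hb.1, fun hbc1 => hbc2 (hle hbc1)⟩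
      exact ⟨e, ⟨he.1, fun hh => he.2 (hh c1 hc1C)⟩, hea, heb⟩
    · have hdir := ((mirred_iff_dir M c2).mp (hC c2 hc2C)).2.2
      obtain ⟨e, he, hea, heb⟩ := hdir a ⟨ha.1, fun hac2 => hac1 (hle hac2)⟩ b ⟨hb.1, hbc2⟩
      exact ⟨e, ⟨he.1, fun hh => he.2 (hh c2 hc2C)⟩, hea, heb⟩

end Aux

/-- existence of minimal m-irreducible ideal sets below a given one
(Proposition 4.14(a)), and the chain-intersection lemma. -/
theorem stmt8 (d : ℕ) (M : Fin d → AddSubgroup ℝ) (hM : ∀ i, M i ≠ ⊥)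
    (I : Set (Fin d → ℝ)) (hI : IsIdealSet M I)
    (J : Set (Fin d → ℝ)) (hJ : MIrred M J) (hIJ : I ⊆ J) :
    (∃ J', MIrred M J' ∧ I ⊆ J' ∧ J' ⊆ J ∧
      ∀ K, MIrred M K → I ⊆ K → K ⊆ J' → K = J') ∧
    (∀ C : Set (Set (Fin d → ℝ)), C.Nonempty → IsChain (· ⊆ ·) C →
      (∀ c ∈ C, MIrred M c ∧ I ⊆ c) → MIrred M (⋂₀ C) ∧ I ⊆ ⋂₀ C) := by
  constructor
  · -- Zorn's lemma on the family of m-irreducible ideal sets between I and J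
    set T : Set (Set (Fin d → ℝ)) := {K | MIrred M K ∧ I ⊆ K ∧ K ⊆ J} with hT
    have hJT : J ∈ T := ⟨hJ, hIJ, Set.Subset.rfl⟩
    obtain ⟨m, hmJ, hmT, hmin⟩ := zorn_superset_nonempty T (fun c hcT hchain hcne => by
      refine ⟨⋂₀ c, ⟨chain_sInter_mirred M c hcne hchain (fun x hx => (hcT hx).1), ?_, ?_⟩,
        fun s hs => Set.sInter_subset_of_mem hs⟩
      · exact Set.subset_sInter fun x hx => (hcT hx).2.1
      · obtain ⟨x, hx⟩ := hcne
        exact (Set.sInter_subset_of_mem hx).trans (hcT hx).2.2) J hJT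
    exact ⟨m, hmT.1, hmT.2.1, hmJ, fun K hK hIK hKm =>
      Set.Subset.antisymm hKm (hmin ⟨hK, hIK, hKm.trans hmJ⟩ hKm)⟩
  · intro C hne hchain hC
    refine ⟨chain_sInter_mirred M C hne hchain (fun c hc => (hC c hc).1),
      Set.subset_sInter fun c hc => (hC c hc).2⟩
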